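/- Let A be a real d×d matrix, a ∈ ℝᵈ, and let κ, ζ₂, α be real numbers. For a vector field of the form V(v,ψ) = (v₀, α cos²ψ) with constant v₀ ∈ ℝᵈ, one has: (a) [ℳ(V), V](v,ψ) = (0, 2α² cos²ψ) for all (v,ψ) ∈ ℝᵈ × ℝ, and (b) [ℳ²(V), ℳ(V)](v, ±π/2) = (0, 4α²) for all v ∈ ℝᵈ. -/

import Mathlib

/-- Lie bracket of vector fields on `(Fin d → ℝ) × ℝ`:
`[V,W](x) = DW(x)(V(x)) − DV(x)(W(x))`. -/
noncomputable def lieBr {d : ℕ} (V W : (Fin d → ℝ) × ℝ → (Fin d → ℝ) × ℝ) :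
    (Fin d → ℝ) × ℝ → (Fin d → ℝ) × ℝ :=
  fun x => fderiv ℝ W x (V x) - fderiv ℝ V x (W x)

/-- The drift vector field `V₀(v,ψ) = (Av, −1 + (1 − κ² + ⟨a,v⟩)cos²ψ − ζ₂ sin 2ψ)`. -/
noncomputable def vfV0 {d : ℕ} (A : Matrix (Fin d) (Fin d) ℝ) (a : Fin d → ℝ)
    (κ ζ₂ : ℝ) : (Fin d → ℝ) × ℝ → (Fin d → ℝ) × ℝ :=
  fun p => (A.mulVec p.1,
    -1 + (1 - κ ^ 2 + dotProduct a p.1) * Real.cos p.2 ^ 2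
      - ζ₂ * Real.sin (2 * p.2))

/-- `ℳ(V) = [V, V₀]`. -/
noncomputable def vfM {d : ℕ} (A : Matrix (Fin d) (Fin d) ℝ) (a : Fin d → ℝ)
    (κ ζ₂ : ℝ) (V : (Fin d → ℝ) × ℝ → (Fin d → ℝ) × ℝ) :
    (Fin d → ℝ) × ℝ → (Fin d → ℝ) × ℝ :=
  lieBr V (vfV0 A a κ ζ₂)

section Aux

open Real ContinuousLinearMap

noncomputable def dotCLM {d : ℕ} (a : Fin d → ℝ) : (Fin d → ℝ) →L[ℝ] ℝ :=
  LinearMap.toContinuousLinearMap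
    { toFun := fun v => dotProduct a v
      map_add' := fun x y => dotProduct_add a x y
      map_smul' := fun c x => dotProduct_smul c a x }

@[simp] lemma dotCLM_apply {d : ℕ} (a v : Fin d → ℝ) :
    dotCLM a v = dotProduct a v := rfl

noncomputable def mulVecCLM {d : ℕ} (A : Matrix (Fin d) (Fin d) ℝ) :
    (Fin d → ℝ) →L[ℝ] (Fin d → ℝ) :=
  LinearMap.toContinuousLinearMap A.mulVecLin

@[simp] lemma mulVecCLM_apply {d : ℕ} (A : Matrix (Fin d) (Fin d) ℝ) (v : Fin d → ℝ) :
    mulVecCLM A v = A.mulVec v := rfl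

/-- Master derivative lemma for vector fields of the shape used here. -/
lemma master {d : ℕ} (f : (Fin d → ℝ) × ℝ → (Fin d → ℝ) × ℝ)
    (c₀ : Fin d → ℝ) (c₁ : (Fin d → ℝ) →L[ℝ] (Fin d → ℝ)) (a : Fin d → ℝ)
    (φ μ : ℝ → ℝ) (p : (Fin d → ℝ) × ℝ) (φd μd : ℝ)
    (hφ : HasDerivAt φ φd p.2) (hμ : HasDerivAt μ μd p.2)
    (hf : ∀ q, f q = (c₀ + c₁ q.1, φ q.2 + dotProduct a q.1 * μ q.2))
    (w : (Fin d → ℝ) × ℝ) :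
    fderiv ℝ f p w
      = (c₁ w.1, w.2 * φd + dotProduct a w.1 * μ p.2
          + dotProduct a p.1 * (w.2 * μd)) := by
  have hfe : f = fun q => (c₀ + c₁ q.1, φ q.2 + dotProduct a q.1 * μ q.2) :=
    funext hf
  subst hfe
  have h1 : HasFDerivAt (fun q : (Fin d → ℝ) × ℝ => c₀ + c₁ q.1)
      (c₁.comp (fst ℝ (Fin d → ℝ) ℝ)) p :=
    ((c₁.hasFDerivAt).comp p (hasFDerivAt_fst)).const_add c₀
  have hφs : HasFDerivAt (fun q : (Fin d → ℝ) × ℝ => φ q.2)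
      (((1 : ℝ →L[ℝ] ℝ).smulRight φd).comp (snd ℝ (Fin d → ℝ) ℝ)) p :=
    (hφ.hasFDerivAt).comp p (hasFDerivAt_snd)
  have hμs : HasFDerivAt (fun q : (Fin d → ℝ) × ℝ => μ q.2)
      (((1 : ℝ →L[ℝ] ℝ).smulRight μd).comp (snd ℝ (Fin d → ℝ) ℝ)) p :=
    (hμ.hasFDerivAt).comp p (hasFDerivAt_snd)
  have hdot : HasFDerivAt (fun q : (Fin d → ℝ) × ℝ => dotProduct a q.1)
      ((dotCLM a).comp (fst ℝ (Fin d → ℝ) ℝ)) p :=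
    ((dotCLM a).hasFDerivAt).comp p (hasFDerivAt_fst)
  have h2 : HasFDerivAt (fun q : (Fin d → ℝ) × ℝ => φ q.2 + dotProduct a q.1 * μ q.2) _ p :=
    hφs.add (hdot.mul hμs)
  rw [(h1.prodMk h2).fderiv]
  refine Prod.ext ?_ ?_
  · simp
  · simp [smul_eq_mul]
    ring

lemma hd_sin2 (t : ℝ) : HasDerivAt (fun t => Real.sin (2*t)) (2 * Real.cos (2*t)) t := by
  have h := (Real.hasDerivAt_sin (2*t)).comp t ((hasDerivAt_id t).const_mul 2)
  refine HasDerivAt.congr_deriv h ?_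
  ring

lemma hd_cos2 (t : ℝ) : HasDerivAt (fun t => Real.cos (2*t)) (-2 * Real.sin (2*t)) t := by
  have h := (Real.hasDerivAt_cos (2*t)).comp t ((hasDerivAt_id t).const_mul 2)
  refine HasDerivAt.congr_deriv h ?_
  ring

lemma hd_cossq (t : ℝ) : HasDerivAt (fun t => Real.cos t ^ 2) (-Real.sin (2*t)) t := by
  have h := (Real.hasDerivAt_cos t).pow 2
  refine HasDerivAt.congr_deriv h ?_
  rw [Real.sin_two_mul]; push_cast; ring

noncomputable def g2 (A₀ α z t : ℝ) : ℝ :=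
  A₀ * Real.cos t ^ 2 - 2*z*α*(Real.cos (2*t) * Real.cos t ^ 2)
    - α * Real.sin (2*t) - α*z*(Real.sin (2*t))^2

noncomputable def g2d (A₀ α z t : ℝ) : ℝ :=
  -(A₀ * Real.sin (2*t)) + 4*z*α*(Real.sin (2*t)*Real.cos t ^ 2)
    - 2*z*α*(Real.sin (2*t)*Real.cos (2*t)) - 2*α*Real.cos (2*t)

lemma hd_g2 (A₀ α z t : ℝ) : HasDerivAt (g2 A₀ α z) (g2d A₀ α z t) t := by
  have h := ((((hd_cossq t).const_mul A₀).sub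
      (((hd_cos2 t).mul (hd_cossq t)).const_mul (2*z*α))).sub
      ((hd_sin2 t).const_mul α)).sub
      (((hd_sin2 t).pow 2).const_mul (α*z))
  refine HasDerivAt.congr_deriv h ?_
  unfold g2d; push_cast; ring

noncomputable def c3 (A₀ B₀ α z β t : ℝ) : ℝ :=
  B₀ * Real.cos t ^ 2 - β * Real.sin (2*t) * g2 A₀ α z t
    - 2*z*(Real.cos (2*t) * g2 A₀ α z t) + g2d A₀ α z t
    - β*(Real.cos t ^ 2 * g2d A₀ α z t) + z*(Real.sin (2*t) * g2d A₀ α z t)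

lemma diff_c3 (A₀ B₀ α z β t : ℝ) : DifferentiableAt ℝ (c3 A₀ B₀ α z β) t := by
  unfold c3 g2 g2d
  fun_prop

/-- Step 1: closed form of `ℳ(V)`. -/
lemma step1 {d : ℕ} (A : Matrix (Fin d) (Fin d) ℝ) (a : Fin d → ℝ)
    (κ ζ₂ α : ℝ) (v₀ : Fin d → ℝ) :
    vfM A a κ ζ₂ (fun q => (v₀, α * Real.cos q.2 ^ 2))
      = fun p => (A.mulVec v₀, g2 (dotProduct a v₀) α ζ₂ p.2) := by
  funext p
  unfold vfM lieBr
  rw [master (vfV0 A a κ ζ₂) 0 (mulVecCLM A) a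
      (fun t => -1 + (1-κ^2) * Real.cos t ^ 2 - ζ₂ * Real.sin (2*t))
      (fun t => Real.cos t ^ 2) p
      ((1-κ^2) * -Real.sin (2*p.2) - ζ₂ * (2 * Real.cos (2*p.2)))
      (-Real.sin (2*p.2))
      ((((hd_cossq p.2).const_mul (1-κ^2)).const_add (-1)).sub
        ((hd_sin2 p.2).const_mul ζ₂))
      (hd_cossq p.2)
      (by intro q; unfold vfV0; refine Prod.ext ?_ ?_
          · simp
          · simp; ring),
    master (fun q => (v₀, α * Real.cos q.2 ^ 2)) v₀ 0 a
      (fun t => α * Real.cos t ^ 2) (fun _ => 0) p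
      (α * -Real.sin (2*p.2)) 0
      ((hd_cossq p.2).const_mul α) (hasDerivAt_const p.2 0)
      (by intro q; simp)]
  show (_, _) - (_, _) = (_, _)
  rw [Prod.mk_sub_mk]
  refine Prod.ext ?_ ?_
  · simp
  · simp only [vfV0, g2]
    rw [Real.sin_two_mul, Real.cos_two_mul]
    ring

/-- Step 2: closed form of `ℳ²(V)`. -/
lemma step2 {d : ℕ} (A : Matrix (Fin d) (Fin d) ℝ) (a : Fin d → ℝ)
    (κ ζ₂ α : ℝ) (v₀ : Fin d → ℝ) :
    vfM A a κ ζ₂ (vfM A a κ ζ₂ (fun q => (v₀, α * Real.cos q.2 ^ 2)))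
      = fun p => (A.mulVec (A.mulVec v₀),
          c3 (dotProduct a v₀) (dotProduct a (A.mulVec v₀)) α ζ₂ (1-κ^2) p.2
            + dotProduct a p.1 * (2*α*Real.cos p.2 ^ 2)) := by
  rw [step1]
  funext p
  unfold vfM lieBr
  rw [master (vfV0 A a κ ζ₂) 0 (mulVecCLM A) a
      (fun t => -1 + (1-κ^2) * Real.cos t ^ 2 - ζ₂ * Real.sin (2*t))
      (fun t => Real.cos t ^ 2) p
      ((1-κ^2) * -Real.sin (2*p.2) - ζ₂ * (2 * Real.cos (2*p.2)))
      (-Real.sin (2*p.2))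
      ((((hd_cossq p.2).const_mul (1-κ^2)).const_add (-1)).sub
        ((hd_sin2 p.2).const_mul ζ₂))
      (hd_cossq p.2)
      (by intro q; unfold vfV0; refine Prod.ext ?_ ?_
          · simp
          · simp; ring),
    master (fun p => (A.mulVec v₀, g2 (dotProduct a v₀) α ζ₂ p.2))
      (A.mulVec v₀) 0 a
      (g2 (dotProduct a v₀) α ζ₂) (fun _ => 0) p
      (g2d (dotProduct a v₀) α ζ₂ p.2) 0
      (hd_g2 _ _ _ _) (hasDerivAt_const p.2 0)
      (by intro q; simp)]
  show (_, _) - (_, _) = (_, _)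
  rw [Prod.mk_sub_mk]
  refine Prod.ext ?_ ?_
  · simp
  · simp only [vfV0, g2, g2d, c3]
    rw [Real.sin_two_mul, Real.cos_two_mul]
    have hs : Real.sin p.2 ^ 2 = 1 - Real.cos p.2 ^ 2 := Real.sin_sq p.2
    linear_combination (4*α*Real.cos p.2^2*dotProduct a p.1
      + 8*ζ₂*α*Real.sin p.2*Real.cos p.2^3*dotProduct a p.1) * hs

/-- For `V(v,ψ) = (v₀, α cos²ψ)` with constant `v₀`:
(a) `[ℳ(V), V](v,ψ) = (0, 2α² cos²ψ)` everywhere, and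
(b) `[ℳ²(V), ℳ(V)](v, ±π/2) = (0, 4α²)`. -/
theorem bracket_cos_sq_field {d : ℕ} (A : Matrix (Fin d) (Fin d) ℝ)
    (a : Fin d → ℝ) (κ ζ₂ α : ℝ) (v₀ : Fin d → ℝ) :
    (∀ p : (Fin d → ℝ) × ℝ,
        lieBr (vfM A a κ ζ₂ (fun q => (v₀, α * Real.cos q.2 ^ 2)))
            (fun q => (v₀, α * Real.cos q.2 ^ 2)) p
          = (0, 2 * α ^ 2 * Real.cos p.2 ^ 2))
    ∧ ∀ v : Fin d → ℝ,
        lieBr (vfM A a κ ζ₂ (vfM A a κ ζ₂ (fun q => (v₀, α * Real.cos q.2 ^ 2))))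
            (vfM A a κ ζ₂ (fun q => (v₀, α * Real.cos q.2 ^ 2))) (v, Real.pi / 2)
          = (0, 4 * α ^ 2)
        ∧ lieBr (vfM A a κ ζ₂ (vfM A a κ ζ₂ (fun q => (v₀, α * Real.cos q.2 ^ 2))))
            (vfM A a κ ζ₂ (fun q => (v₀, α * Real.cos q.2 ^ 2))) (v, -(Real.pi / 2))
          = (0, 4 * α ^ 2) := by
  constructor
  · intro p
    rw [step1]
    unfold lieBr
    rw [master (fun q => (v₀, α * Real.cos q.2 ^ 2)) v₀ 0 a
        (fun t => α * Real.cos t ^ 2) (fun _ => 0) p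
        (α * -Real.sin (2*p.2)) 0
        ((hd_cossq p.2).const_mul α) (hasDerivAt_const p.2 0)
        (by intro q; simp),
      master (fun p => (A.mulVec v₀, g2 (dotProduct a v₀) α ζ₂ p.2))
        (A.mulVec v₀) 0 a
        (g2 (dotProduct a v₀) α ζ₂) (fun _ => 0) p
        (g2d (dotProduct a v₀) α ζ₂ p.2) 0
        (hd_g2 _ _ _ _) (hasDerivAt_const p.2 0)
        (by intro q; simp)]
    show (_, _) - (_, _) = (_, _)
    rw [Prod.mk_sub_mk]
    refine Prod.ext ?_ ?_
    · simp
    · simp only [g2, g2d]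
      rw [Real.sin_two_mul, Real.cos_two_mul]
      have hs : Real.sin p.2 ^ 2 = 1 - Real.cos p.2 ^ 2 := Real.sin_sq p.2
      linear_combination (4*Real.cos p.2^2*α^2
        + 8*Real.sin p.2*Real.cos p.2^3*α^2*ζ₂) * hs
  · intro v
    constructor
    all_goals {
      rw [step2, step1]
      unfold lieBr
      rw [master (fun p => (A.mulVec v₀, g2 (dotProduct a v₀) α ζ₂ p.2))
          (A.mulVec v₀) 0 a
          (g2 (dotProduct a v₀) α ζ₂) (fun _ => 0) _
          (g2d (dotProduct a v₀) α ζ₂ _) 0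
          (hd_g2 _ _ _ _) (hasDerivAt_const _ 0)
          (by intro q; simp),
        master (fun p => (A.mulVec (A.mulVec v₀),
            c3 (dotProduct a v₀) (dotProduct a (A.mulVec v₀)) α ζ₂ (1-κ^2) p.2
              + dotProduct a p.1 * (2*α*Real.cos p.2 ^ 2)))
          (A.mulVec (A.mulVec v₀)) 0 a
          (c3 (dotProduct a v₀) (dotProduct a (A.mulVec v₀)) α ζ₂ (1-κ^2))
          (fun t => 2*α*Real.cos t ^ 2) _
          (deriv (c3 (dotProduct a v₀) (dotProduct a (A.mulVec v₀)) α ζ₂ (1-κ^2)) _)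
          (2*α*(-Real.sin (2*_))) ((diff_c3 _ _ _ _ _ _).hasDerivAt)
          ((hd_cossq _).const_mul (2*α))
          (by intro q; simp)]
      show (_, _) - (_, _) = (_, _)
      rw [Prod.mk_sub_mk]
      refine Prod.ext ?_ ?_
      · simp
      · simp only [g2, g2d, c3]
        norm_num [Real.cos_pi_div_two, mul_div_cancel₀, Real.sin_pi, Real.cos_pi]
        ring
    }
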